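/- Let k be a non-perfect field of characteristic p > 0, λ ∈ k \ k^p, and m ≥ 2. Let A = k[X,Y,Z,T]/(X^mY − Z^p − λT^p − T), with x,y,z,t the images of X,Y,Z,T. Then the assignments φ(x) = x, φ(t) = t, φ(z) = z + x^m U, φ(y) = y + x^{mp−m}U^p define a nontrivial exponential map φ: A → A[U]. -/

import Mathlib

open Polynomial


/-- An exponential map (equivalently, a `𝔾ₐ`-action) on a `k`-algebra `A`:
a `k`-algebra homomorphism `φ : A → A[U]` such that evaluation at `U = 0`
is the identity and the coaction axiom `φ_V ∘ φ_U = φ_{U+V}` holds. -/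
structure ExpMap (k A : Type*) [Field k] [CommRing A] [Algebra k A] where
  toFun : A →ₐ[k] Polynomial A
  eval_zero : ∀ a : A, (toFun a).eval 0 = a
  coaction : ∀ a : A,
    (toFun a).map (toFun.toRingHom) =
      (toFun a).eval₂ (Polynomial.C.comp Polynomial.C)
        (Polynomial.X + Polynomial.C Polynomial.X)

variable {k A : Type*} [Field k] [CommRing A] [Algebra k A]

/-- The ring of invariants `A^φ = {a ∈ A : φ(a) = a}` of an exponential map. -/
def ExpMap.invariants (φ : ExpMap k A) : Subalgebra k A where
  carrier := {a : A | φ.toFun a = Polynomial.C a}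
  mul_mem' := by
    intro a b ha hb
    simp only [Set.mem_setOf_eq, map_mul] at *
    rw [ha, hb]
  add_mem' := by
    intro a b ha hb
    simp only [Set.mem_setOf_eq, map_add] at *
    rw [ha, hb]
  algebraMap_mem' := by
    intro r
    simp only [Set.mem_setOf_eq, AlgHom.commutes, Polynomial.algebraMap_apply]

/-- An exponential map is nontrivial if its ring of invariants is a proper subring. -/
def ExpMap.Nontrivial (φ : ExpMap k A) : Prop := ∃ a : A, φ.toFun a ≠ Polynomial.C a

set_option maxHeartbeats 1000000 in
set_option synthInstance.maxHeartbeats 400000 in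
/-- For `A = k[X,Y,Z,T]/(XᵐY - Zᵖ - λTᵖ - T)` over a non-perfect field of
characteristic `p > 0` with `λ ∉ kᵖ` and `m ≥ 2`, the assignments `φ(x) = x`, `φ(t) = t`,
`φ(z) = z + xᵐ U`, `φ(y) = y + x^{mp-m} Uᵖ` define a nontrivial exponential map on `A`. -/
theorem stmt9 (p : ℕ) (hp : 0 < p) [CharP k p] (lam : k) (hlam : ∀ c : k, c ^ p ≠ lam)
    (m : ℕ) (hm : 2 ≤ m) :
    letI R := MvPolynomial (Fin 4) k
    letI I : Ideal R := Ideal.span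
      {(MvPolynomial.X 0 : R) ^ m * MvPolynomial.X 1 - MvPolynomial.X 2 ^ p
        - MvPolynomial.C lam * MvPolynomial.X 3 ^ p - MvPolynomial.X 3}
    letI x : R ⧸ I := Ideal.Quotient.mk I (MvPolynomial.X 0)
    letI y : R ⧸ I := Ideal.Quotient.mk I (MvPolynomial.X 1)
    letI z : R ⧸ I := Ideal.Quotient.mk I (MvPolynomial.X 2)
    letI t : R ⧸ I := Ideal.Quotient.mk I (MvPolynomial.X 3)
    ∃ φ : ExpMap k (R ⧸ I),
      φ.toFun x = Polynomial.C x ∧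
      φ.toFun t = Polynomial.C t ∧
      φ.toFun z = Polynomial.C z + Polynomial.C (x ^ m) * Polynomial.X ∧
      φ.toFun y = Polynomial.C y + Polynomial.C (x ^ (m * p - m)) * Polynomial.X ^ p ∧
      ∃ a : R ⧸ I, φ.toFun a ≠ Polynomial.C a := by
  haveI : NeZero p := ⟨hp.ne'⟩
  haveI : Fact p.Prime := CharP.char_is_prime_of_pos k p
  set f : MvPolynomial (Fin 4) k := MvPolynomial.X 0 ^ m * MvPolynomial.X 1 - MvPolynomial.X 2 ^ p
        - MvPolynomial.C lam * MvPolynomial.X 3 ^ p - MvPolynomial.X 3 with hf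
  set I : Ideal (MvPolynomial (Fin 4) k) := Ideal.span {f} with hI
  let Q := MvPolynomial (Fin 4) k ⧸ I
  letI : CommRing Q := Ideal.Quotient.commRing I
  let mk : MvPolynomial (Fin 4) k →+* Q := Ideal.Quotient.mk I
  let x : Q := mk (MvPolynomial.X 0)
  let y : Q := mk (MvPolynomial.X 1)
  let z : Q := mk (MvPolynomial.X 2)
  let t : Q := mk (MvPolynomial.X 3)
  have hfI : f ∈ I := Ideal.subset_span rfl
  have hmkC : ∀ c : k, mk (MvPolynomial.C c) = algebraMap k Q c := fun _ => rfl
  -- evaluation at (1,0,0,0)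
  have hev : (MvPolynomial.aeval (![1,0,0,0] : Fin 4 → k)) f = 0 := by
    simp [hf, hp.ne', zero_pow]
  have hevker : ∀ g ∈ I, (MvPolynomial.aeval (![1,0,0,0] : Fin 4 → k)) g = 0 := by
    intro g hg
    have h2 : I ≤ RingHom.ker (MvPolynomial.aeval (![1,0,0,0] : Fin 4 → k)).toRingHom :=
      Ideal.span_le.mpr (Set.singleton_subset_iff.mpr hev)
    exact h2 hg
  let ev : Q →ₐ[k] k := Ideal.Quotient.liftₐ I _ hevker
  have hev_mk : ∀ g, ev (mk g) = (MvPolynomial.aeval (![1,0,0,0] : Fin 4 → k)) g := by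
    intro g
    rw [Ideal.Quotient.liftₐ_apply]
    exact Ideal.Quotient.lift_mk _ _ _
  haveI : Nontrivial Q := ev.toRingHom.domain_nontrivial
  haveI : CharP Q p := charP_of_injective_ringHom (RingHom.injective (algebraMap k Q)) p
  have hev_x : ev (x ^ m) = 1 := by
    rw [← map_pow, hev_mk]; simp
  -- the candidate map on generators
  let v : Fin 4 → Polynomial Q :=
    ![Polynomial.C x, Polynomial.C y + Polynomial.C (x ^ (m * p - m)) * Polynomial.X ^ p,
      Polynomial.C z + Polynomial.C (x ^ m) * Polynomial.X, Polynomial.C t]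
  let ψ : MvPolynomial (Fin 4) k →ₐ[k] Polynomial Q := MvPolynomial.aeval v
  have hψC : ∀ c : k, ψ (MvPolynomial.C c) = Polynomial.C (algebraMap k Q c) := by
    intro c
    rw [show ψ (MvPolynomial.C c) = (MvPolynomial.aeval v) (MvPolynomial.C c) from rfl,
      MvPolynomial.aeval_C, Polynomial.algebraMap_apply]
  have hψ0 : ψ (MvPolynomial.X 0) = Polynomial.C x := by
    rw [show ψ (MvPolynomial.X 0) = (MvPolynomial.aeval v) (MvPolynomial.X 0) from rfl,
      MvPolynomial.aeval_X]
    rfl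
  have hψ1 : ψ (MvPolynomial.X 1)
      = Polynomial.C y + Polynomial.C (x ^ (m * p - m)) * Polynomial.X ^ p := by
    rw [show ψ (MvPolynomial.X 1) = (MvPolynomial.aeval v) (MvPolynomial.X 1) from rfl,
      MvPolynomial.aeval_X]
    rfl
  have hψ2 : ψ (MvPolynomial.X 2)
      = Polynomial.C z + Polynomial.C (x ^ m) * Polynomial.X := by
    rw [show ψ (MvPolynomial.X 2) = (MvPolynomial.aeval v) (MvPolynomial.X 2) from rfl,
      MvPolynomial.aeval_X]
    rfl
  have hψ3 : ψ (MvPolynomial.X 3) = Polynomial.C t := by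
    rw [show ψ (MvPolynomial.X 3) = (MvPolynomial.aeval v) (MvPolynomial.X 3) from rfl,
      MvPolynomial.aeval_X]
    rfl
  have hmmp : m + (m * p - m) = m * p := by
    have := Nat.le_mul_of_pos_right m hp; omega
  -- the relation in the quotient
  have h0 : x ^ m * y - z ^ p - algebraMap k Q lam * t ^ p - t = 0 := by
    have h1 : mk f = 0 := Ideal.Quotient.eq_zero_iff_mem.mpr hfI
    rw [hf, map_sub, map_sub, map_sub, map_mul, map_mul, map_pow, map_pow, hmkC] at h1
    exact h1
  have hψf : ψ f = 0 := by
    have hxy : (Polynomial.C (x ^ m) : Polynomial Q) * Polynomial.C (x ^ (m*p-m))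
        = Polynomial.C (x ^ (m*p)) := by
      rw [← Polynomial.C_mul, ← pow_add, hmmp]
    have h0' := congrArg (Polynomial.C : Q →+* Polynomial Q) h0
    simp only [map_sub, map_mul, map_zero] at h0'
    rw [hf]
    simp only [map_sub, map_mul, map_pow]
    rw [hψC, hψ0, hψ1, hψ2, hψ3, add_pow_char, mul_pow]
    simp only [← Polynomial.C_pow, ← pow_mul]
    linear_combination h0' + Polynomial.X ^ p * hxy
  have hψker : ∀ g ∈ I, ψ g = 0 := by
    intro g hg
    have h2 : I ≤ RingHom.ker ψ.toRingHom :=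
      Ideal.span_le.mpr (Set.singleton_subset_iff.mpr hψf)
    exact h2 hg
  let φ0 : Q →ₐ[k] Polynomial Q := Ideal.Quotient.liftₐ I ψ hψker
  have hφmk : ∀ g, φ0 (mk g) = ψ g := by
    intro g
    rw [Ideal.Quotient.liftₐ_apply]
    exact Ideal.Quotient.lift_mk _ _ _
  have hφx : φ0 x = Polynomial.C x := (hφmk _).trans hψ0
  have hφy : φ0 y = Polynomial.C y + Polynomial.C (x ^ (m*p-m)) * Polynomial.X ^ p :=
    (hφmk _).trans hψ1
  have hφz : φ0 z = Polynomial.C z + Polynomial.C (x ^ m) * Polynomial.X := (hφmk _).trans hψ2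
  have hφt : φ0 t = Polynomial.C t := (hφmk _).trans hψ3
  -- eval at zero
  have heval0 : ∀ a : Q, (φ0 a).eval 0 = a := by
    have hcomp : (Polynomial.evalRingHom (0 : Q)).comp φ0.toRingHom = RingHom.id Q := by
      refine Ideal.Quotient.ringHom_ext (MvPolynomial.ringHom_ext ?_ ?_)
      · intro c
        show (φ0 (mk (MvPolynomial.C c))).eval 0 = mk (MvPolynomial.C c)
        rw [hφmk, hψC, Polynomial.eval_C, hmkC]
      · intro i
        fin_cases i
        · show (φ0 x).eval 0 = x
          rw [hφx, Polynomial.eval_C]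
        · show (φ0 y).eval 0 = y
          rw [hφy]; simp [hp.ne', zero_pow]
        · show (φ0 z).eval 0 = z
          rw [hφz]; simp
        · show (φ0 t).eval 0 = t
          rw [hφt, Polynomial.eval_C]
    intro a
    exact RingHom.congr_fun hcomp a
  -- coaction
  have hcoact : ∀ a : Q,
      (φ0 a).map φ0.toRingHom =
        (φ0 a).eval₂ (Polynomial.C.comp Polynomial.C)
          (Polynomial.X + Polynomial.C Polynomial.X) := by
    letI : CommSemiring (Polynomial (Polynomial Q)) := Polynomial.commSemiring
    have hXp : (Polynomial.X + Polynomial.C Polynomial.X : Polynomial (Polynomial Q)) ^ p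
        = Polynomial.X ^ p + Polynomial.C (Polynomial.X ^ p) := by
      rw [add_pow_char, ← Polynomial.C_pow]
    let E : Polynomial Q →+* Polynomial (Polynomial Q) :=
      Polynomial.eval₂RingHom
        ((Polynomial.C.comp Polynomial.C : Q →+* Polynomial (Polynomial Q)))
        (Polynomial.X + Polynomial.C Polynomial.X)
    have hE : ∀ q : Polynomial Q, E q = q.eval₂ (Polynomial.C.comp Polynomial.C)
        (Polynomial.X + Polynomial.C Polynomial.X) := fun q => rfl
    have hcomp : ((Polynomial.mapRingHom φ0.toRingHom).comp φ0.toRingHom)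
        = E.comp φ0.toRingHom := by
      refine Ideal.Quotient.ringHom_ext (MvPolynomial.ringHom_ext ?_ ?_)
      · intro c
        show (φ0 (mk (MvPolynomial.C c))).map φ0.toRingHom = E (φ0 (mk (MvPolynomial.C c)))
        rw [hφmk, hψC, hE, Polynomial.map_C, Polynomial.eval₂_C]
        have hc : φ0.toRingHom ((algebraMap k Q) c) = Polynomial.C ((algebraMap k Q) c) := by
          show φ0 ((algebraMap k Q) c) = _
          rw [← hmkC, hφmk, hψC, hmkC]
        rw [hc, RingHom.comp_apply]
      · intro i
        fin_cases i
        · show (φ0 x).map φ0.toRingHom = E (φ0 x)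
          rw [hφx, hE, Polynomial.map_C, Polynomial.eval₂_C]
          simp only [AlgHom.toRingHom_eq_coe, RingHom.coe_coe, hφx, RingHom.coe_comp,
            Function.comp_apply]
        · show (φ0 y).map φ0.toRingHom = E (φ0 y)
          rw [hφy, hE]
          simp only [Polynomial.map_add, Polynomial.map_mul, Polynomial.map_pow,
            Polynomial.map_C, Polynomial.map_X, Polynomial.eval₂_add, Polynomial.eval₂_mul,
            Polynomial.eval₂_pow, Polynomial.eval₂_C, Polynomial.eval₂_X,
            AlgHom.toRingHom_eq_coe, RingHom.coe_coe, RingHom.coe_comp, Function.comp_apply,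
            map_pow, hφx, hφy, hXp]
          simp only [Polynomial.C_add, Polynomial.C_mul, ← Polynomial.C_pow]
          ring
        · show (φ0 z).map φ0.toRingHom = E (φ0 z)
          rw [hφz, hE]
          simp only [Polynomial.map_add, Polynomial.map_mul, Polynomial.map_pow,
            Polynomial.map_C, Polynomial.map_X, Polynomial.eval₂_add, Polynomial.eval₂_mul,
            Polynomial.eval₂_pow, Polynomial.eval₂_C, Polynomial.eval₂_X,
            AlgHom.toRingHom_eq_coe, RingHom.coe_coe, RingHom.coe_comp, Function.comp_apply,
            map_pow, hφx, hφz]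
          simp only [Polynomial.C_add, Polynomial.C_mul, ← Polynomial.C_pow]
          ring
        · show (φ0 t).map φ0.toRingHom = E (φ0 t)
          rw [hφt, hE, Polynomial.map_C, Polynomial.eval₂_C]
          simp only [AlgHom.toRingHom_eq_coe, RingHom.coe_coe, hφt, RingHom.coe_comp,
            Function.comp_apply]
    intro a
    calc (φ0 a).map φ0.toRingHom = ((Polynomial.mapRingHom φ0.toRingHom).comp φ0.toRingHom) a := rfl
    _ = E.comp φ0.toRingHom a := by rw [hcomp]
    _ = _ := rfl
  -- nontriviality
  have hnt : φ0 z ≠ Polynomial.C z := by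
    intro h
    rw [hφz] at h
    have h2 := congrArg (fun q => Polynomial.coeff q 1) h
    simp only [Polynomial.coeff_add, Polynomial.coeff_C_mul, Polynomial.coeff_X_one,
      Polynomial.coeff_C, if_neg one_ne_zero, mul_one, zero_add] at h2
    rw [h2, map_zero] at hev_x
    exact zero_ne_one hev_x
  exact ⟨⟨φ0, heval0, hcoact⟩, hφx, hφt, hφz, hφy, ⟨z, hnt⟩⟩
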